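/- Consider the target Newton-seeking system ẋ(t) = k·F(v(t)), v̇(t) = −K·F(H*·v(t) + ∇h(x(t))) on ℝᵖ × ℝᵖ, where a solution is a continuously differentiable pair (x,v) : [0,∞) → ℝᵖ × ℝᵖ satisfying these equations for all t ≥ 0. Then for any gain k > 0 there exists K* > 0 such that for every K > K* the point (x*, 0) is a globally finite-time stable equilibrium: (i) the constant function (x*,0) is a solution; (ii) for every ε > 0 there exists δ > 0 such that every solution with ‖x(0) − x*‖² + ‖v(0)‖² < δ² satisfies ‖x(t) − x*‖² + ‖v(t)‖² < ε² for all t ≥ 0; and (iii) for every solution there exists a finite settling time T₀ ≥ 0 such that x(t) = x* and v(t) = 0 for all t ≥ T₀. -/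

import Mathlib

attribute [local instance] Classical.propDecidable

open scoped InnerProductSpace NNReal

/-- The scaling factor `γ(w) = c₁‖w‖^{-α₁} + c₂‖w‖^{-α₂}` (Euclidean norm, real powers). -/
noncomputable def gammaFun {n : ℕ} (c₁ c₂ α₁ α₂ : ℝ) (w : EuclideanSpace ℝ (Fin n)) : ℝ :=
  c₁ * ‖w‖ ^ (-α₁) + c₂ * ‖w‖ ^ (-α₂)

/-- The map `F(w) = γ(w)·w` for `w ≠ 0`, with `F(0) = 0`. -/
noncomputable def Fmap {n : ℕ} (c₁ c₂ α₁ α₂ : ℝ) (w : EuclideanSpace ℝ (Fin n)) :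
    EuclideanSpace ℝ (Fin n) :=
  if w = 0 then 0 else gammaFun c₁ c₂ α₁ α₂ w • w

/-- Matrix-vector multiplication viewed as a map on Euclidean space. -/
noncomputable def mulVecE {n : ℕ} (H : Matrix (Fin n) (Fin n) ℝ)
    (w : EuclideanSpace ℝ (Fin n)) : EuclideanSpace ℝ (Fin n) :=
  (EuclideanSpace.equiv (Fin n) ℝ).symm (H.mulVec (EuclideanSpace.equiv (Fin n) ℝ w))

/-- Matrix-vector multiplication as a continuous linear map on Euclidean space. -/
noncomputable def mulVecCLM {n : ℕ} (H : Matrix (Fin n) (Fin n) ℝ) :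
    EuclideanSpace ℝ (Fin n) →L[ℝ] EuclideanSpace ℝ (Fin n) :=
  LinearMap.toContinuousLinearMap (Matrix.toEuclideanLin H)

/-- A solution of the target Newton-seeking system
`ẋ = k F(v)`, `v̇ = -K F(H* v + ∇h(x))` on `[0,∞)`. -/
def IsTargetSol {p : ℕ} (c₁ c₂ α₁ α₂ k K : ℝ) (h : EuclideanSpace ℝ (Fin p) → ℝ)
    (Hstar : Matrix (Fin p) (Fin p) ℝ)
    (x v : ℝ → EuclideanSpace ℝ (Fin p)) : Prop :=
  (∀ t : ℝ, 0 ≤ t → HasDerivAt x (k • Fmap c₁ c₂ α₁ α₂ (v t)) t) ∧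
  (∀ t : ℝ, 0 ≤ t →
    HasDerivAt v (-(K • Fmap c₁ c₂ α₁ α₂ (mulVecE Hstar (v t) + gradient h (x t)))) t)

/-! ### Auxiliary lemmas -/

lemma real_rpow_add_le_add_rpow {a b p : ℝ} (ha : 0 ≤ a) (hb : 0 ≤ b)
    (hp : 0 ≤ p) (hp1 : p ≤ 1) : (a + b) ^ p ≤ a ^ p + b ^ p := by
  have h := NNReal.rpow_add_le_add_rpow a.toNNReal b.toNNReal hp hp1
  rw [show a = (a.toNNReal : ℝ) from (Real.coe_toNNReal a ha).symm,
    show b = (b.toNNReal : ℝ) from (Real.coe_toNNReal b hb).symm]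
  rw [← NNReal.coe_add, ← NNReal.coe_rpow, ← NNReal.coe_rpow, ← NNReal.coe_rpow,
    ← NNReal.coe_add]
  exact_mod_cast h

section FmapLemmas
variable {n : ℕ} {c₁ c₂ α₁ α₂ : ℝ}
  (hc₁ : 0 < c₁) (hc₂ : 0 < c₂) (hα₁0 : 0 < α₁) (hα₁1 : α₁ < 1) (hα₂0 : α₂ < 0)

lemma Fmap_zero' : Fmap c₁ c₂ α₁ α₂ (0 : EuclideanSpace ℝ (Fin n)) = 0 := if_pos rfl

include hc₁ hc₂ in
lemma gamma_pos {w : EuclideanSpace ℝ (Fin n)} (hw : w ≠ 0) :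
    0 < gammaFun c₁ c₂ α₁ α₂ w := by
  have hn : 0 < ‖w‖ := norm_pos_iff.mpr hw
  have h1 : 0 < ‖w‖ ^ (-α₁) := Real.rpow_pos_of_pos hn _
  have h2 : 0 < ‖w‖ ^ (-α₂) := Real.rpow_pos_of_pos hn _
  unfold gammaFun; positivity

include hc₁ hc₂ hα₁1 hα₂0 in
lemma norm_Fmap (w : EuclideanSpace ℝ (Fin n)) :
    ‖Fmap c₁ c₂ α₁ α₂ w‖ = c₁ * ‖w‖ ^ (1 - α₁) + c₂ * ‖w‖ ^ (1 - α₂) := by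
  by_cases hw : w = 0
  · subst hw
    simp only [Fmap_zero', norm_zero]
    rw [Real.zero_rpow (by linarith : (1:ℝ) - α₁ ≠ 0),
      Real.zero_rpow (by linarith : (1:ℝ) - α₂ ≠ 0)]
    ring
  · have hn : 0 < ‖w‖ := norm_pos_iff.mpr hw
    rw [Fmap, if_neg hw, norm_smul, Real.norm_eq_abs,
      abs_of_pos (gamma_pos hc₁ hc₂ hw)]
    unfold gammaFun
    rw [add_mul, mul_assoc, mul_assoc]
    rw [show (‖w‖:ℝ) ^ (-α₁) * ‖w‖ = ‖w‖ ^ (1 - α₁) by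
      nth_rewrite 2 [← Real.rpow_one ‖w‖]
      rw [← Real.rpow_add hn]; ring_nf]
    rw [show (‖w‖:ℝ) ^ (-α₂) * ‖w‖ = ‖w‖ ^ (1 - α₂) by
      nth_rewrite 2 [← Real.rpow_one ‖w‖]
      rw [← Real.rpow_add hn]; ring_nf]

include hc₁ hc₂ in
lemma inner_Fmap_self (w : EuclideanSpace ℝ (Fin n)) :
    ⟪w, Fmap c₁ c₂ α₁ α₂ w⟫_ℝ = ‖w‖ * ‖Fmap c₁ c₂ α₁ α₂ w‖ := by
  by_cases hw : w = 0
  · subst hw; simp [Fmap_zero']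
  · rw [Fmap, if_neg hw, real_inner_smul_right, real_inner_self_eq_norm_sq, norm_smul,
      Real.norm_eq_abs, abs_of_pos (gamma_pos hc₁ hc₂ hw)]
    ring

include hc₁ hc₂ in
lemma inner_Fmap_nonneg (w : EuclideanSpace ℝ (Fin n)) :
    0 ≤ ⟪w, Fmap c₁ c₂ α₁ α₂ w⟫_ℝ := by
  rw [inner_Fmap_self hc₁ hc₂]
  positivity

include hc₁ hc₂ hα₁1 hα₂0 in
lemma inner_Fmap_formula (w : EuclideanSpace ℝ (Fin n)) :
    ⟪w, Fmap c₁ c₂ α₁ α₂ w⟫_ℝ = c₁ * ‖w‖ ^ (2 - α₁) + c₂ * ‖w‖ ^ (2 - α₂) := by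
  rw [inner_Fmap_self hc₁ hc₂, norm_Fmap hc₁ hc₂ hα₁1 hα₂0]
  by_cases hw : w = 0
  · subst hw
    simp only [norm_zero]
    rw [Real.zero_rpow (by linarith : (1:ℝ) - α₁ ≠ 0),
      Real.zero_rpow (by linarith : (1:ℝ) - α₂ ≠ 0),
      Real.zero_rpow (by linarith : (2:ℝ) - α₁ ≠ 0),
      Real.zero_rpow (by linarith : (2:ℝ) - α₂ ≠ 0)]
    ring
  · have hn : 0 < ‖w‖ := norm_pos_iff.mpr hw
    rw [mul_add]
    rw [show ‖w‖ * (c₁ * ‖w‖ ^ (1 - α₁)) = c₁ * (‖w‖ ^ (1:ℝ) * ‖w‖ ^ (1 - α₁)) by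
      rw [Real.rpow_one]; ring]
    rw [show ‖w‖ * (c₂ * ‖w‖ ^ (1 - α₂)) = c₂ * (‖w‖ ^ (1:ℝ) * ‖w‖ ^ (1 - α₂)) by
      rw [Real.rpow_one]; ring]
    rw [← Real.rpow_add hn, ← Real.rpow_add hn]
    ring_nf

include hc₁ hc₂ hα₁0 hα₁1 hα₂0 in
lemma Fmap_cross {ε : ℝ} (hε : 1 ≤ ε) (u w : EuclideanSpace ℝ (Fin n)) :
    ‖u‖ * ‖Fmap c₁ c₂ α₁ α₂ w‖ ≤
      ε⁻¹ * ⟪w, Fmap c₁ c₂ α₁ α₂ w⟫_ℝ + ε ^ (1 - α₂) * ⟪u, Fmap c₁ c₂ α₁ α₂ u⟫_ℝ := by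
  have hεpos : 0 < ε := by linarith
  have hPw : 0 ≤ ⟪w, Fmap c₁ c₂ α₁ α₂ w⟫_ℝ := inner_Fmap_nonneg hc₁ hc₂ w
  have hPu : 0 ≤ ⟪u, Fmap c₁ c₂ α₁ α₂ u⟫_ℝ := inner_Fmap_nonneg hc₁ hc₂ u
  have hεp : (0:ℝ) ≤ ε ^ (1 - α₂) := (Real.rpow_pos_of_pos hεpos _).le
  by_cases hcase : ‖u‖ ≤ ε⁻¹ * ‖w‖
  · have h1 : ‖u‖ * ‖Fmap c₁ c₂ α₁ α₂ w‖ ≤ ε⁻¹ * ‖w‖ * ‖Fmap c₁ c₂ α₁ α₂ w‖ :=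
      mul_le_mul_of_nonneg_right hcase (norm_nonneg _)
    rw [mul_assoc, ← inner_Fmap_self hc₁ hc₂] at h1
    nlinarith [mul_nonneg hεp hPu]
  · push_neg at hcase
    have hwu : ‖w‖ ≤ ε * ‖u‖ := by
      rw [inv_mul_lt_iff₀ hεpos] at hcase
      exact hcase.le
    have h2 : ‖Fmap c₁ c₂ α₁ α₂ w‖ ≤ ε ^ (1 - α₂) * ‖Fmap c₁ c₂ α₁ α₂ u‖ := by
      rw [norm_Fmap hc₁ hc₂ hα₁1 hα₂0, norm_Fmap hc₁ hc₂ hα₁1 hα₂0]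
      have hb1 : ‖w‖ ^ (1 - α₁) ≤ (ε * ‖u‖) ^ (1 - α₁) :=
        Real.rpow_le_rpow (norm_nonneg _) hwu (by linarith)
      have hb2 : ‖w‖ ^ (1 - α₂) ≤ (ε * ‖u‖) ^ (1 - α₂) :=
        Real.rpow_le_rpow (norm_nonneg _) hwu (by linarith)
      rw [Real.mul_rpow hεpos.le (norm_nonneg _)] at hb1 hb2
      have hεle : ε ^ (1 - α₁) ≤ ε ^ (1 - α₂) :=
        Real.rpow_le_rpow_of_exponent_le hε (by linarith)
      have hu1 : (0:ℝ) ≤ ‖u‖ ^ (1 - α₁) := Real.rpow_nonneg (norm_nonneg _) _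
      have hu2 : (0:ℝ) ≤ ‖u‖ ^ (1 - α₂) := Real.rpow_nonneg (norm_nonneg _) _
      nlinarith [mul_le_mul_of_nonneg_right hεle hu1]
    have h3 : ‖u‖ * ‖Fmap c₁ c₂ α₁ α₂ w‖ ≤ ε ^ (1 - α₂) * (‖u‖ * ‖Fmap c₁ c₂ α₁ α₂ u‖) := by
      calc ‖u‖ * ‖Fmap c₁ c₂ α₁ α₂ w‖ ≤ ‖u‖ * (ε ^ (1 - α₂) * ‖Fmap c₁ c₂ α₁ α₂ u‖) :=
            mul_le_mul_of_nonneg_left h2 (norm_nonneg _)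
        _ = ε ^ (1 - α₂) * (‖u‖ * ‖Fmap c₁ c₂ α₁ α₂ u‖) := by ring
    rw [← inner_Fmap_self hc₁ hc₂] at h3
    nlinarith [mul_nonneg (inv_nonneg.mpr hεpos.le) hPw]

end FmapLemmas

lemma mulVecCLM_apply {n : ℕ} (H : Matrix (Fin n) (Fin n) ℝ) (w : EuclideanSpace ℝ (Fin n)) :
    mulVecCLM H w = mulVecE H w := rfl

lemma inner_mulVecE_symm {n : ℕ} {H : Matrix (Fin n) (Fin n) ℝ} (hH : H.IsSymm)
    (u w : EuclideanSpace ℝ (Fin n)) :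
    ⟪mulVecE H u, w⟫_ℝ = ⟪u, mulVecE H w⟫_ℝ := by
  rw [EuclideanSpace.inner_eq_star_dotProduct, EuclideanSpace.inner_eq_star_dotProduct]
  simp only [mulVecE, EuclideanSpace.equiv, star_trivial,
    PiLp.continuousLinearEquiv_symm_apply, PiLp.continuousLinearEquiv_apply]
  show w.ofLp ⬝ᵥ H.mulVec u.ofLp = H.mulVec w.ofLp ⬝ᵥ u.ofLp
  rw [Matrix.dotProduct_mulVec, ← Matrix.mulVec_transpose, hH.eq, dotProduct_comm]

lemma inner_mulVecCLM_symm {n : ℕ} {H : Matrix (Fin n) (Fin n) ℝ} (hH : H.IsSymm)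
    (u w : EuclideanSpace ℝ (Fin n)) :
    ⟪mulVecCLM H u, w⟫_ℝ = ⟪u, mulVecCLM H w⟫_ℝ := inner_mulVecE_symm hH u w

open Set in
lemma lyap_decay {V : ℝ → ℝ} {κ β : ℝ} (hκ : 0 < κ) (hβ0 : 0 < β) (hβ1 : β < 1)
    (hV0 : ∀ t, 0 ≤ t → 0 ≤ V t)
    (hd : ∀ t, 0 ≤ t → ∃ d, HasDerivAt V d t ∧ d ≤ -κ * V t ^ β) :
    (∀ s t : ℝ, 0 ≤ s → s ≤ t → V t ≤ V s) ∧
    (∀ t : ℝ, V 0 ^ (1 - β) / (κ * (1 - β)) ≤ t → V t = 0) := by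
  have hκβ : 0 < κ * (1 - β) := mul_pos hκ (by linarith)
  have hanti : AntitoneOn V (Ici 0) := by
    apply antitoneOn_of_deriv_nonpos (convex_Ici 0)
    · intro t ht
      exact ((hd t ht).choose_spec.1).continuousAt.continuousWithinAt
    · intro t ht
      rw [interior_Ici] at ht
      exact ((hd t (le_of_lt ht)).choose_spec.1).differentiableAt.differentiableWithinAt
    · intro t ht
      rw [interior_Ici] at ht
      obtain ⟨d, hD, hle⟩ := hd t ht.le
      rw [hD.deriv]
      have h1 : (0:ℝ) ≤ V t ^ β := Real.rpow_nonneg (hV0 t ht.le) β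
      nlinarith
  have hmono : ∀ s t : ℝ, 0 ≤ s → s ≤ t → V t ≤ V s := by
    intro s t hs hst
    exact hanti hs (le_trans hs hst) hst
  refine ⟨hmono, ?_⟩
  set T : ℝ := V 0 ^ (1 - β) / (κ * (1 - β)) with hTdef
  have hT0 : 0 ≤ T := div_nonneg (Real.rpow_nonneg (hV0 0 le_rfl) _) hκβ.le
  have hzero : ∃ t₀, 0 ≤ t₀ ∧ t₀ ≤ T ∧ V t₀ = 0 := by
    by_contra hcon
    push_neg at hcon
    have hpos : ∀ t ∈ Icc (0:ℝ) T, 0 < V t := by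
      intro t ht
      exact lt_of_le_of_ne (hV0 t ht.1) (Ne.symm (hcon t ht.1 ht.2))
    set φ : ℝ → ℝ := fun t => V t ^ (1 - β) + κ * (1 - β) * t with hφdef
    have hφd : ∀ t ∈ Icc (0:ℝ) T, ∃ d, HasDerivAt φ d t ∧ d ≤ 0 := by
      intro t ht
      obtain ⟨d, hD, hle⟩ := hd t ht.1
      have hVt : 0 < V t := hpos t ht
      have h1 : HasDerivAt (fun u => V u ^ (1 - β)) (d * (1 - β) * V t ^ (1 - β - 1)) t :=
        hD.rpow_const (Or.inl hVt.ne')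
      have h2 : HasDerivAt (fun u : ℝ => κ * (1 - β) * u) (κ * (1 - β)) t := by
        simpa using (hasDerivAt_id t).const_mul (κ * (1 - β))
      refine ⟨_, h1.add h2, ?_⟩
      have hexp : (1:ℝ) - β - 1 = -β := by ring
      have hVnb : 0 < V t ^ (-β) := Real.rpow_pos_of_pos hVt _
      have hcancel : V t ^ β * V t ^ (-β) = 1 := by
        rw [← Real.rpow_add hVt]; simp
      have hstep : d * (1 - β) * V t ^ (1 - β - 1) ≤ -κ * (1 - β) := by
        rw [hexp]
        have := mul_le_mul_of_nonneg_right hle hVnb.le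
        calc d * (1 - β) * V t ^ (-β) = d * V t ^ (-β) * (1 - β) := by ring
          _ ≤ -κ * V t ^ β * V t ^ (-β) * (1 - β) := by nlinarith
          _ = -κ * (V t ^ β * V t ^ (-β)) * (1 - β) := by ring
          _ = -κ * (1 - β) := by rw [hcancel]; ring
      linarith
    have hφanti : AntitoneOn φ (Icc 0 T) := by
      apply antitoneOn_of_deriv_nonpos (convex_Icc 0 T)
      · intro t ht
        exact ((hφd t ht).choose_spec.1).continuousAt.continuousWithinAt
      · intro t ht
        rw [interior_Icc] at ht
        exact ((hφd t (Ioo_subset_Icc_self ht)).choose_spec.1).differentiableAt.differentiableWithinAt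
      · intro t ht
        rw [interior_Icc] at ht
        obtain ⟨d, hD, hle⟩ := hφd t (Ioo_subset_Icc_self ht)
        rw [hD.deriv]; exact hle
    have hTmem : T ∈ Icc (0:ℝ) T := ⟨hT0, le_rfl⟩
    have h0mem : (0:ℝ) ∈ Icc (0:ℝ) T := ⟨le_rfl, hT0⟩
    have := hφanti h0mem hTmem hT0
    have hTval : κ * (1 - β) * T = V 0 ^ (1 - β) := by
      rw [hTdef]; have hne : (1:ℝ) - β ≠ 0 := by linarith
      field_simp
    have hVTpos : 0 < V T ^ (1 - β) := Real.rpow_pos_of_pos (hpos T hTmem) _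
    simp only [hφdef] at this
    rw [hTval] at this
    simp at this
    linarith
  obtain ⟨t₀, ht₀0, ht₀T, hVt₀⟩ := hzero
  intro t ht
  have h1 : V t ≤ V t₀ := hmono t₀ t ht₀0 (le_trans ht₀T ht)
  have h2 : 0 ≤ V t := hV0 t (le_trans hT0 ht)
  rw [hVt₀] at h1
  linarith

set_option maxHeartbeats 1000000 in
theorem stmt0 (p : ℕ) (c₁ c₂ q₁ q₂ α₁ α₂ : ℝ)
    (hc₁ : 0 < c₁) (hc₂ : 0 < c₂)
    (hq₁ : 2 < q₁) (hq₂₁ : 1 < q₂) (hq₂₂ : q₂ < 2)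
    (hα₁ : α₁ = (q₁ - 2) / (q₁ - 1)) (hα₂ : α₂ = (q₂ - 2) / (q₂ - 1))
    (h : EuclideanSpace ℝ (Fin p) → ℝ) (hsmooth : ContDiff ℝ 2 h)
    (xstar : EuclideanSpace ℝ (Fin p))
    (hcrit : ∀ x : EuclideanSpace ℝ (Fin p), gradient h x = 0 ↔ x = xstar)
    (Hstar : Matrix (Fin p) (Fin p) ℝ) (hHsymm : Hstar.IsSymm) (hHpd : Hstar.PosDef)
    (αh : ℝ) (hαh : 0 < αh)
    (hHlb : ∀ w : EuclideanSpace ℝ (Fin p), αh * ‖w‖ ^ 2 ≤ ⟪w, mulVecE Hstar w⟫_ℝ)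
    (hhess : ∀ x : EuclideanSpace ℝ (Fin p), HasFDerivAt (gradient h) (mulVecCLM Hstar) x) :
    ∀ k > (0 : ℝ), ∃ Kstar > (0 : ℝ), ∀ K > Kstar,
      -- (i) the constant function (x*, 0) is a solution
      IsTargetSol c₁ c₂ α₁ α₂ k K h Hstar (fun _ => xstar) (fun _ => 0) ∧
      -- (ii) Lyapunov stability
      (∀ ε > (0 : ℝ), ∃ δ > (0 : ℝ), ∀ x v : ℝ → EuclideanSpace ℝ (Fin p),
        IsTargetSol c₁ c₂ α₁ α₂ k K h Hstar x v →
        ‖x 0 - xstar‖ ^ 2 + ‖v 0‖ ^ 2 < δ ^ 2 →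
        ∀ t : ℝ, 0 ≤ t → ‖x t - xstar‖ ^ 2 + ‖v t‖ ^ 2 < ε ^ 2) ∧
      -- (iii) finite-time convergence of every solution
      (∀ x v : ℝ → EuclideanSpace ℝ (Fin p),
        IsTargetSol c₁ c₂ α₁ α₂ k K h Hstar x v →
        ∃ T₀ : ℝ, 0 ≤ T₀ ∧ ∀ t : ℝ, T₀ ≤ t → x t = xstar ∧ v t = 0) := by
  intro k hk
  -- exponent facts
  have hq₁1 : (0:ℝ) < q₁ - 1 := by linarith
  have hq₂1 : (0:ℝ) < q₂ - 1 := by linarith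
  have hα₁0 : 0 < α₁ := by rw [hα₁]; exact div_pos (by linarith) hq₁1
  have hα₁1 : α₁ < 1 := by rw [hα₁, div_lt_one hq₁1]; linarith
  have hα₂0 : α₂ < 0 := by rw [hα₂]; exact div_neg_of_neg_of_pos (by linarith) hq₂1
  set β : ℝ := 1 - α₁ / 2 with hβdef
  have hβ0 : 0 < β := by rw [hβdef]; linarith
  have hβ1 : β < 1 := by rw [hβdef]; linarith
  set c : ℝ := αh / 2 with hcdef
  have hcpos : 0 < c := by rw [hcdef]; linarith
  set ε₀ : ℝ := max 1 (2 / c) with hε₀def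
  have hε₀1 : 1 ≤ ε₀ := le_max_left _ _
  have hε₀pos : 0 < ε₀ := by linarith
  have hε₀c : ε₀⁻¹ ≤ c / 2 := by
    have h1 : 2 / c ≤ ε₀ := le_max_right _ _
    have h2 : 0 < 2 / c := by positivity
    calc ε₀⁻¹ ≤ (2 / c)⁻¹ := by
          apply inv_anti₀ h2 h1
      _ = c / 2 := by field_simp
  have hε₀p : 0 < ε₀ ^ (1 - α₂) := Real.rpow_pos_of_pos hε₀pos _
  refine ⟨4 * k * ε₀ ^ (1 - α₂), by positivity, ?_⟩
  intro K hKK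
  have hKpos : 0 < K := lt_trans (by positivity) hKK
  -- the gradient is affine
  have hgrad : ∀ y, gradient h y = mulVecE Hstar (y - xstar) := by
    have hdiff : Differentiable ℝ (fun y => gradient h y - mulVecCLM Hstar y) :=
      fun y => ((hhess y).differentiableAt).sub ((mulVecCLM Hstar).differentiable y)
    have hfz : ∀ y, fderiv ℝ (fun y => gradient h y - mulVecCLM Hstar y) y = 0 := by
      intro y
      have h1 : HasFDerivAt (fun y => gradient h y - mulVecCLM Hstar y)
          (mulVecCLM Hstar - mulVecCLM Hstar) y :=
        (hhess y).sub ((mulVecCLM Hstar).hasFDerivAt)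
      rw [sub_self] at h1
      exact h1.fderiv
    have hconst := is_const_of_fderiv_eq_zero hdiff hfz
    intro y
    have h1 := hconst y xstar
    have h2 : gradient h xstar = 0 := (hcrit xstar).mpr rfl
    rw [h2, zero_sub] at h1
    have h3 : gradient h y = mulVecCLM Hstar (y - xstar) := by
      rw [map_sub]
      rw [sub_eq_iff_eq_add.mp h1]
      abel
    rw [h3, mulVecCLM_apply]
  -- constants
  set Mop : ℝ := ‖mulVecCLM (n := p) Hstar‖ with hMopdef
  have hMop : 0 ≤ Mop := norm_nonneg _
  set Mup : ℝ := 3 * (Mop + c + 1) with hMupdef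
  have hMup : 0 < Mup := by rw [hMupdef]; positivity
  set C₂ : ℝ := 1 / αh + 1 + αh with hC₂def
  have hC₂ : 0 < C₂ := by rw [hC₂def]; positivity
  set m₀ : ℝ := min (K / 4) (c * k / 2) with hm₀def
  have hm₀ : 0 < m₀ := lt_min (by positivity) (by positivity)
  set κ : ℝ := m₀ * c₁ / C₂ ^ β with hκdef
  have hκ : 0 < κ := by
    have := Real.rpow_pos_of_pos hC₂ β
    rw [hκdef]; positivity
  -- key per-trajectory analysis
  have key : ∀ x v : ℝ → EuclideanSpace ℝ (Fin p),
      IsTargetSol c₁ c₂ α₁ α₂ k K h Hstar x v →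
      ∃ W : ℝ → ℝ,
        (∀ t : ℝ, αh / 48 * (‖x t - xstar‖ ^ 2 + ‖v t‖ ^ 2) ≤ W t) ∧
        (∀ t : ℝ, W t ≤ Mup * (‖x t - xstar‖ ^ 2 + ‖v t‖ ^ 2)) ∧
        (∀ s t : ℝ, 0 ≤ s → s ≤ t → W t ≤ W s) ∧
        (∃ T₀ : ℝ, 0 ≤ T₀ ∧ ∀ t : ℝ, T₀ ≤ t → W t = 0) := by
    intro x v hsol
    obtain ⟨hx, hv⟩ := hsol
    set F : EuclideanSpace ℝ (Fin p) → EuclideanSpace ℝ (Fin p) := Fmap c₁ c₂ α₁ α₂ with hFdef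
    set s : ℝ → EuclideanSpace ℝ (Fin p) := fun t => x t + v t - xstar with hsdef
    set η : ℝ → EuclideanSpace ℝ (Fin p) := fun t => mulVecCLM Hstar (s t) with hηdef
    set W : ℝ → ℝ := fun t =>
      1 / 2 * ⟪s t, η t⟫_ℝ + c / 2 * ⟪v t, v t⟫_ℝ - c * ⟪v t, s t⟫_ℝ with hWdef
    -- rewrite the argument of F in the v-equation
    have hveq : ∀ t, mulVecE Hstar (v t) + gradient h (x t) = η t := by
      intro t
      rw [hgrad, ← mulVecCLM_apply, ← mulVecCLM_apply, ← map_add, hηdef]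
      show mulVecCLM Hstar _ = mulVecCLM Hstar (s t)
      congr 1
      rw [hsdef]
      abel
    -- basic inner product facts
    have hsη : ∀ t, αh * ‖s t‖ ^ 2 ≤ ⟪s t, η t⟫_ℝ := by
      intro t
      have := hHlb (s t)
      rwa [← mulVecCLM_apply] at this
    have hsnorm : ∀ t, αh * ‖s t‖ ≤ ‖η t‖ := by
      intro t
      by_cases h0 : s t = 0
      · rw [hηdef]; simp only [h0, map_zero, norm_zero]; simp
      · have h1 := hsη t
        have h2 : ⟪s t, η t⟫_ℝ ≤ ‖s t‖ * ‖η t‖ := real_inner_le_norm _ _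
        have h3 : 0 < ‖s t‖ := norm_pos_iff.mpr h0
        have h4 : ‖s t‖ * (αh * ‖s t‖) ≤ ‖s t‖ * ‖η t‖ := by
          have : αh * ‖s t‖ ^ 2 = ‖s t‖ * (αh * ‖s t‖) := by ring
          linarith only [h1, h2, this]
        exact le_of_mul_le_mul_left h4 h3
    -- lower bound
    have hlb : ∀ t, αh / 48 * (‖x t - xstar‖ ^ 2 + ‖v t‖ ^ 2) ≤ W t := by
      intro t
      have h1 := hsη t
      have h2 : |⟪v t, s t⟫_ℝ| ≤ ‖v t‖ * ‖s t‖ := abs_real_inner_le_norm _ _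
      have h3 : ⟪v t, v t⟫_ℝ = ‖v t‖ ^ 2 := real_inner_self_eq_norm_sq _
      have h4 : ‖x t - xstar‖ ≤ ‖s t‖ + ‖v t‖ := by
        have : x t - xstar = s t - v t := by simp only [hsdef]; abel
        rw [this]
        exact norm_sub_le _ _
      have h5 := abs_le.mp h2
      have h6 : ‖x t - xstar‖ ^ 2 ≤ (‖s t‖ + ‖v t‖) ^ 2 :=
        pow_le_pow_left₀ (norm_nonneg _) h4 2
      simp only [hWdef, hcdef, h3]
      linarith only [h1, mul_le_mul_of_nonneg_left h5.2 (by positivity : (0:ℝ) ≤ αh / 2),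
        mul_le_mul_of_nonneg_left h6 (by positivity : (0:ℝ) ≤ αh / 48),
        mul_nonneg hαh.le (sq_nonneg (23 * ‖s t‖ - 13 * ‖v t‖)),
        mul_nonneg hαh.le (sq_nonneg ‖v t‖)]
    have hWnn : ∀ t, 0 ≤ W t := by
      intro t
      refine le_trans ?_ (hlb t)
      positivity
    -- upper bound in terms of (x - xstar, v)
    have hub : ∀ t, W t ≤ Mup * (‖x t - xstar‖ ^ 2 + ‖v t‖ ^ 2) := by
      intro t
      have h1 : ⟪s t, η t⟫_ℝ ≤ ‖s t‖ * ‖η t‖ := real_inner_le_norm _ _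
      have h2 : ‖η t‖ ≤ Mop * ‖s t‖ := by
        rw [hηdef, hMopdef]
        exact (mulVecCLM Hstar).le_opNorm (s t)
      have h3 : |⟪v t, s t⟫_ℝ| ≤ ‖v t‖ * ‖s t‖ := abs_real_inner_le_norm _ _
      have h4 : ⟪v t, v t⟫_ℝ = ‖v t‖ ^ 2 := real_inner_self_eq_norm_sq _
      have h5 : ‖s t‖ ≤ ‖x t - xstar‖ + ‖v t‖ := by
        have : s t = (x t - xstar) + v t := by rw [hsdef]; abel
        rw [this]
        exact norm_add_le _ _
      have h6 := abs_le.mp h3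
      have h7 : ‖s t‖ ^ 2 ≤ (‖x t - xstar‖ + ‖v t‖) ^ 2 :=
        pow_le_pow_left₀ (norm_nonneg _) h5 2
      have hS2 : ‖s t‖ ^ 2 ≤ 2 * ‖x t - xstar‖ ^ 2 + 2 * ‖v t‖ ^ 2 := by
        linarith only [h7, sq_nonneg (‖x t - xstar‖ - ‖v t‖)]
      have haux2 : ‖s t‖ * ‖η t‖ ≤ ‖s t‖ * (Mop * ‖s t‖) :=
        mul_le_mul_of_nonneg_left h2 (norm_nonneg (s t))
      have haux3 : c * -(‖v t‖ * ‖s t‖) ≤ c * ⟪v t, s t⟫_ℝ :=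
        mul_le_mul_of_nonneg_left h6.1 hcpos.le
      have haux4 : c * (‖v t‖ * ‖s t‖) ≤ c * ((‖v t‖ ^ 2 + ‖s t‖ ^ 2) / 2) :=
        mul_le_mul_of_nonneg_left
          (by linarith only [sq_nonneg (‖v t‖ - ‖s t‖)]) hcpos.le
      have haux5 : (Mop + c) / 2 * ‖s t‖ ^ 2 ≤
          (Mop + c) / 2 * (2 * ‖x t - xstar‖ ^ 2 + 2 * ‖v t‖ ^ 2) :=
        mul_le_mul_of_nonneg_left hS2 (by positivity)
      simp only [hWdef, hMupdef, h4]
      linarith only [h1, haux2, haux3, haux4, haux5, sq_nonneg ‖x t - xstar‖,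
        sq_nonneg ‖v t‖,
        mul_nonneg hMop (sq_nonneg ‖x t - xstar‖), mul_nonneg hMop (sq_nonneg ‖v t‖),
        mul_nonneg hcpos.le (sq_nonneg ‖x t - xstar‖),
        mul_nonneg hcpos.le (sq_nonneg ‖v t‖)]
    -- upper bound in terms of (v, η)
    have hub2 : ∀ t, W t ≤ C₂ * (‖v t‖ ^ 2 + ‖η t‖ ^ 2) := by
      intro t
      have h1 : ⟪s t, η t⟫_ℝ ≤ ‖s t‖ * ‖η t‖ := real_inner_le_norm _ _
      have h2 := hsnorm t
      have h3 : |⟪v t, s t⟫_ℝ| ≤ ‖v t‖ * ‖s t‖ := abs_real_inner_le_norm _ _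
      have h4 : ⟪v t, v t⟫_ℝ = ‖v t‖ ^ 2 := real_inner_self_eq_norm_sq _
      have h6 := abs_le.mp h3
      have hb : αh * αh⁻¹ = 1 := mul_inv_cancel₀ hαh.ne'
      have hbnn : (0:ℝ) ≤ αh⁻¹ := by positivity
      have q1 : ‖s t‖ ≤ αh⁻¹ * ‖η t‖ := by
        have := mul_le_mul_of_nonneg_left h2 hbnn
        calc ‖s t‖ = αh⁻¹ * (αh * ‖s t‖) := by
              rw [← mul_assoc, mul_comm αh⁻¹ αh, hb, one_mul]
          _ ≤ αh⁻¹ * ‖η t‖ := this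
      have r1 : ⟪s t, η t⟫_ℝ ≤ αh⁻¹ * ‖η t‖ * ‖η t‖ :=
        le_trans h1 (mul_le_mul_of_nonneg_right q1 (norm_nonneg _))
      have r2 : -(αh / 2 * ⟪v t, s t⟫_ℝ) ≤ 1 / 2 * (‖v t‖ * ‖η t‖) := by
        have ra : -⟪v t, s t⟫_ℝ ≤ ‖v t‖ * (αh⁻¹ * ‖η t‖) := by
          have := mul_le_mul_of_nonneg_left q1 (norm_nonneg (v t))
          linarith only [this, h6.1]
        have rb := mul_le_mul_of_nonneg_left ra (by positivity : (0:ℝ) ≤ αh / 2)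
        have rc : αh / 2 * (‖v t‖ * (αh⁻¹ * ‖η t‖)) = 1 / 2 * (‖v t‖ * ‖η t‖) := by
          field_simp
        linarith only [rb, rc]
      simp only [hWdef, hcdef, hC₂def, h4, one_div]
      linarith only [r1, r2, sq_nonneg (‖v t‖ - ‖η t‖), mul_nonneg hbnn (sq_nonneg ‖v t‖),
        mul_nonneg hbnn (sq_nonneg ‖η t‖), mul_nonneg hαh.le (sq_nonneg ‖v t‖),
        mul_nonneg hαh.le (sq_nonneg ‖η t‖), sq_nonneg ‖v t‖, sq_nonneg ‖η t‖]
    -- the derivative bound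
    have hdW : ∀ t, 0 ≤ t → ∃ d, HasDerivAt W d t ∧ d ≤ -κ * W t ^ β := by
      intro t ht
      have hxd := hx t ht
      have hvd := hv t ht
      rw [hveq t] at hvd
      set D : EuclideanSpace ℝ (Fin p) := k • F (v t) + -(K • F (η t)) with hDdef
      have hsd : HasDerivAt s D t := by
        rw [hDdef]
        exact ((hxd.add hvd).sub_const xstar)
      have hηd : HasDerivAt η (mulVecCLM Hstar D) t :=
        ((mulVecCLM Hstar).hasFDerivAt.comp_hasDerivAt t hsd)
      have h1 : HasDerivAt (fun u => ⟪s u, η u⟫_ℝ)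
          (⟪s t, mulVecCLM Hstar D⟫_ℝ + ⟪D, η t⟫_ℝ) t := HasDerivAt.inner ℝ hsd hηd
      have h2 : HasDerivAt (fun u => ⟪v u, v u⟫_ℝ)
          (⟪v t, -(K • F (η t))⟫_ℝ + ⟪-(K • F (η t)), v t⟫_ℝ) t := HasDerivAt.inner ℝ hvd hvd
      have h3 : HasDerivAt (fun u => ⟪v u, s u⟫_ℝ)
          (⟪v t, D⟫_ℝ + ⟪-(K • F (η t)), s t⟫_ℝ) t := HasDerivAt.inner ℝ hvd hsd
      refine ⟨_, ((h1.const_mul (1 / 2 : ℝ)).add (h2.const_mul (c / 2))).sub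
        (h3.const_mul c), ?_⟩
      -- simplify the derivative value
      have hsym : ⟪s t, mulVecCLM Hstar D⟫_ℝ = ⟪D, η t⟫_ℝ := by
        rw [← inner_mulVecCLM_symm hHsymm]
        exact real_inner_comm D (η t)
      set Pv : ℝ := ⟪v t, F (v t)⟫_ℝ with hPvdef
      set Qη : ℝ := ⟪η t, F (η t)⟫_ℝ with hQηdef
      have hval : 1 / 2 * (⟪s t, mulVecCLM Hstar D⟫_ℝ + ⟪D, η t⟫_ℝ) +
          c / 2 * (⟪v t, -(K • F (η t))⟫_ℝ + ⟪-(K • F (η t)), v t⟫_ℝ) -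
          c * (⟪v t, D⟫_ℝ + ⟪-(K • F (η t)), s t⟫_ℝ) =
          k * ⟪η t, F (v t)⟫_ℝ - K * Qη - c * k * Pv + c * K * ⟪F (η t), s t⟫_ℝ := by
        rw [hsym, hDdef, hPvdef, hQηdef]
        simp only [inner_add_left, inner_add_right, inner_neg_left, inner_neg_right,
          real_inner_smul_left, real_inner_smul_right]
        rw [real_inner_comm (F (v t)) (η t), real_inner_comm (F (η t)) (η t),
          real_inner_comm (F (η t)) (v t), real_inner_comm (F (v t)) (v t)]
        ring
      rw [hval]
      -- now bound it
      have hPv : 0 ≤ Pv := inner_Fmap_nonneg hc₁ hc₂ (v t)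
      have hQη : 0 ≤ Qη := inner_Fmap_nonneg hc₁ hc₂ (η t)
      have hb1 : ⟪η t, F (v t)⟫_ℝ ≤ ε₀⁻¹ * Pv + ε₀ ^ (1 - α₂) * Qη := by
        have hcs : ⟪η t, F (v t)⟫_ℝ ≤ ‖η t‖ * ‖F (v t)‖ := real_inner_le_norm _ _
        have := Fmap_cross hc₁ hc₂ hα₁0 hα₁1 hα₂0 hε₀1 (η t) (v t)
        rw [hPvdef, hQηdef]
        calc ⟪η t, F (v t)⟫_ℝ ≤ ‖η t‖ * ‖F (v t)‖ := hcs
          _ ≤ _ := this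
      have hb2 : ⟪F (η t), s t⟫_ℝ ≤ Qη / αh := by
        have hcs : ⟪F (η t), s t⟫_ℝ ≤ ‖F (η t)‖ * ‖s t‖ := real_inner_le_norm _ _
        have h2 := hsnorm t
        have h3 : Qη = ‖η t‖ * ‖F (η t)‖ := inner_Fmap_self hc₁ hc₂ (η t)
        have hFn : 0 ≤ ‖F (η t)‖ := norm_nonneg _
        rw [div_eq_inv_mul, h3]
        have h5 : ‖s t‖ ≤ αh⁻¹ * ‖η t‖ := by
          rw [le_inv_mul_iff₀ hαh]
          linarith [hsnorm t]
        calc ⟪F (η t), s t⟫_ℝ ≤ ‖F (η t)‖ * ‖s t‖ := hcs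
          _ ≤ ‖F (η t)‖ * (αh⁻¹ * ‖η t‖) := mul_le_mul_of_nonneg_left h5 hFn
          _ = αh⁻¹ * (‖η t‖ * ‖F (η t)‖) := by ring
      -- combine
      have hKq : k * ε₀ ^ (1 - α₂) ≤ K / 4 := by
        have : 4 * k * ε₀ ^ (1 - α₂) < K := hKK
        linarith
      have hkp : k * ε₀⁻¹ ≤ c * k / 2 := by
        have := mul_le_mul_of_nonneg_left hε₀c hk.le
        calc k * ε₀⁻¹ ≤ k * (c / 2) := this
          _ = c * k / 2 := by ring
      have hstep1 : k * ⟪η t, F (v t)⟫_ℝ - K * Qη - c * k * Pv + c * K * ⟪F (η t), s t⟫_ℝ ≤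
          -(K / 4) * Qη - c * k / 2 * Pv := by
        have e1 : k * ⟪η t, F (v t)⟫_ℝ ≤ k * (ε₀⁻¹ * Pv + ε₀ ^ (1 - α₂) * Qη) :=
          mul_le_mul_of_nonneg_left hb1 hk.le
        have e2 : c * K * ⟪F (η t), s t⟫_ℝ ≤ c * K * (Qη / αh) :=
          mul_le_mul_of_nonneg_left hb2 (by positivity)
        have e3 : c * K * (Qη / αh) = K / 2 * Qη := by
          rw [hcdef]; field_simp
        have e4 : k * (ε₀⁻¹ * Pv) ≤ c * k / 2 * Pv := by
          have := mul_le_mul_of_nonneg_right hkp hPv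
          calc k * (ε₀⁻¹ * Pv) = k * ε₀⁻¹ * Pv := by ring
            _ ≤ c * k / 2 * Pv := this
        have e5 : k * (ε₀ ^ (1 - α₂) * Qη) ≤ K / 4 * Qη := by
          have := mul_le_mul_of_nonneg_right hKq hQη
          calc k * (ε₀ ^ (1 - α₂) * Qη) = k * ε₀ ^ (1 - α₂) * Qη := by ring
            _ ≤ K / 4 * Qη := this
        rw [e3] at e2
        linarith only [e1, e2, e4, e5]
      have hstep2 : -(K / 4) * Qη - c * k / 2 * Pv ≤ -m₀ * (Pv + Qη) := by
        have h1 : m₀ ≤ K / 4 := min_le_left _ _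
        have h2 : m₀ ≤ c * k / 2 := min_le_right _ _
        linarith only [mul_le_mul_of_nonneg_right h1 hQη,
          mul_le_mul_of_nonneg_right h2 hPv]
      -- lower bound on Pv + Qη
      have hfv := inner_Fmap_formula hc₁ hc₂ hα₁1 hα₂0 (v t)
      have hfη := inner_Fmap_formula hc₁ hc₂ hα₁1 hα₂0 (η t)
      have hpow : ∀ w : EuclideanSpace ℝ (Fin p), (‖w‖ ^ 2) ^ β = ‖w‖ ^ (2 - α₁) := by
        intro w
        have h2β : ((2:ℕ):ℝ) * β = 2 - α₁ := by push_cast; rw [hβdef]; ring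
        rw [← Real.rpow_natCast ‖w‖ 2, ← Real.rpow_mul (norm_nonneg w), h2β]
      have hc₂v : 0 ≤ c₂ * ‖v t‖ ^ (2 - α₂) :=
        mul_nonneg hc₂.le (Real.rpow_nonneg (norm_nonneg _) _)
      have hc₂η : 0 ≤ c₂ * ‖η t‖ ^ (2 - α₂) :=
        mul_nonneg hc₂.le (Real.rpow_nonneg (norm_nonneg _) _)
      have hPQ : c₁ * (‖v t‖ ^ 2 + ‖η t‖ ^ 2) ^ β ≤ Pv + Qη := by
        have hsub := real_rpow_add_le_add_rpow (sq_nonneg ‖v t‖) (sq_nonneg ‖η t‖)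
          hβ0.le hβ1.le
        rw [hpow (v t), hpow (η t)] at hsub
        have hmul := mul_le_mul_of_nonneg_left hsub hc₁.le
        rw [hPvdef, hQηdef, hfv, hfη]
        linarith only [hmul, hc₂v, hc₂η]
      -- upper bound (W t)^β ≤ C₂^β * (...)^β
      have hWb : W t ^ β ≤ C₂ ^ β * (‖v t‖ ^ 2 + ‖η t‖ ^ 2) ^ β := by
        have h1 : W t ≤ C₂ * (‖v t‖ ^ 2 + ‖η t‖ ^ 2) := hub2 t
        have h2 : W t ^ β ≤ (C₂ * (‖v t‖ ^ 2 + ‖η t‖ ^ 2)) ^ β :=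
          Real.rpow_le_rpow (hWnn t) h1 hβ0.le
        rwa [Real.mul_rpow hC₂.le (by positivity)] at h2
      have hfinal : -m₀ * (Pv + Qη) ≤ -κ * W t ^ β := by
        have hC₂β : 0 < C₂ ^ β := Real.rpow_pos_of_pos hC₂ β
        have h1 : m₀ * (c₁ * (‖v t‖ ^ 2 + ‖η t‖ ^ 2) ^ β) ≤ m₀ * (Pv + Qη) :=
          mul_le_mul_of_nonneg_left hPQ hm₀.le
        have h2 : κ * W t ^ β ≤ m₀ * (c₁ * (‖v t‖ ^ 2 + ‖η t‖ ^ 2) ^ β) := by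
          rw [hκdef]
          rw [div_mul_eq_mul_div, div_le_iff₀ hC₂β]
          calc m₀ * c₁ * W t ^ β ≤ m₀ * c₁ * (C₂ ^ β * (‖v t‖ ^ 2 + ‖η t‖ ^ 2) ^ β) :=
                mul_le_mul_of_nonneg_left hWb (by positivity)
            _ = m₀ * (c₁ * (‖v t‖ ^ 2 + ‖η t‖ ^ 2) ^ β) * C₂ ^ β := by ring
        linarith
      linarith
    -- apply the scalar decay lemma
    obtain ⟨hmono, hzero⟩ := lyap_decay hκ hβ0 hβ1 (fun t _ => hWnn t) hdW
    refine ⟨W, hlb, hub, hmono, ?_⟩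
    refine ⟨W 0 ^ (1 - β) / (κ * (1 - β)), ?_, fun t ht => hzero t ht⟩
    apply div_nonneg (Real.rpow_nonneg (hWnn 0) _)
    have : 0 < 1 - β := by linarith
    positivity
  -- assemble the three claims
  refine ⟨?_, ?_, ?_⟩
  · -- (i) constant solution
    constructor
    · intro t ht
      have : Fmap c₁ c₂ α₁ α₂ (0 : EuclideanSpace ℝ (Fin p)) = 0 := Fmap_zero'
      rw [this, smul_zero]
      exact hasDerivAt_const t xstar
    · intro t ht
      have h0 : mulVecE Hstar (0 : EuclideanSpace ℝ (Fin p)) = 0 := by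
        rw [← mulVecCLM_apply]; exact map_zero _
      have h1 : gradient h xstar = 0 := (hcrit xstar).mpr rfl
      rw [h0, h1, add_zero, Fmap_zero', smul_zero, neg_zero]
      exact hasDerivAt_const t 0
  · -- (ii) stability
    intro ε hε
    refine ⟨ε * Real.sqrt (αh / 48 / Mup), by positivity, ?_⟩
    intro x v hsol hinit t ht
    obtain ⟨W, hlb, hub, hmono, _⟩ := key x v hsol
    have hδsq : (ε * Real.sqrt (αh / 48 / Mup)) ^ 2 = ε ^ 2 * (αh / 48 / Mup) := by
      rw [mul_pow, Real.sq_sqrt (by positivity)]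
    rw [hδsq] at hinit
    have h1 : αh / 48 * (‖x t - xstar‖ ^ 2 + ‖v t‖ ^ 2) ≤ W t := hlb t
    have h2 : W t ≤ W 0 := hmono 0 t le_rfl ht
    have h3 : W 0 ≤ Mup * (‖x 0 - xstar‖ ^ 2 + ‖v 0‖ ^ 2) := hub 0
    have h4 : Mup * (‖x 0 - xstar‖ ^ 2 + ‖v 0‖ ^ 2) < Mup * (ε ^ 2 * (αh / 48 / Mup)) :=
      mul_lt_mul_of_pos_left hinit hMup
    have h5 : Mup * (ε ^ 2 * (αh / 48 / Mup)) = αh / 48 * ε ^ 2 := by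
      field_simp
    have h6 : αh / 48 * (‖x t - xstar‖ ^ 2 + ‖v t‖ ^ 2) < αh / 48 * ε ^ 2 := by
      rw [← h5]
      linarith
    have hαh48 : 0 < αh / 48 := by linarith
    exact lt_of_mul_lt_mul_left h6 hαh48.le
  · -- (iii) finite-time convergence
    intro x v hsol
    obtain ⟨W, hlb, _, _, T₀, hT₀0, hTz⟩ := key x v hsol
    refine ⟨T₀, hT₀0, ?_⟩
    intro t ht
    have hWt : W t = 0 := hTz t ht
    have h1 := hlb t
    rw [hWt] at h1
    have h2 : 0 ≤ ‖x t - xstar‖ ^ 2 := sq_nonneg _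
    have h3 : 0 ≤ ‖v t‖ ^ 2 := sq_nonneg _
    have hαh48 : 0 < αh / 48 := by linarith
    have h4 : ‖x t - xstar‖ ^ 2 + ‖v t‖ ^ 2 ≤ 0 := by
      have h4a : αh / 48 * (‖x t - xstar‖ ^ 2 + ‖v t‖ ^ 2) ≤ αh / 48 * 0 := by
        linarith only [h1]
      exact le_of_mul_le_mul_left h4a hαh48
    have h5 : ‖x t - xstar‖ = 0 := by
      have : ‖x t - xstar‖ ^ 2 = 0 := le_antisymm (by linarith) h2
      exact pow_eq_zero_iff (n := 2) (by norm_num) |>.mp this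
    have h6 : ‖v t‖ = 0 := by
      have : ‖v t‖ ^ 2 = 0 := le_antisymm (by linarith) h3
      exact pow_eq_zero_iff (n := 2) (by norm_num) |>.mp this
    exact ⟨sub_eq_zero.mp (norm_eq_zero.mp h5), norm_eq_zero.mp h6⟩
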